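/- For fixed K ≥ 2 and P > 0, let n₁ < … < n_K and γ satisfy γ + K ln J(P) = n_k C(P) − √(n_k · ln_{(K−k+1)}(n_k) · V(P)) for all k. Then the consecutive gaps satisfy n_{i+1} − n_i = (1/C(P))·(√(n_i ln_{(K−i)}(n_i) V(P)) − √(n_i ln_{(K−i+1)}(n_i) V(P)))·(1 + o(1)) as n_i → ∞; in particular n_k = n₁(1 + o(1)) for every k. -/

import Mathlib

open Filter

/-- The `k`-fold nested logarithm: `itlog 0 x = x`, `itlog (k+1) x = ln (itlog k x)`. -/
noncomputable def itlog : ℕ → ℝ → ℝ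
  | 0, x => x
  | k + 1, x => Real.log (itlog k x)

/-- Capacity of the Gaussian channel. -/
noncomputable def gaussC (P : ℝ) : ℝ := (1/2) * Real.log (1 + P)

/-- Dispersion of the Gaussian channel. -/
noncomputable def gaussV (P : ℝ) : ℝ := P * (P + 2) / (2 * (1 + P) ^ 2)

/-- The constant `J(P)` bounding the sphere-vs-Gaussian output density ratio. -/
noncomputable def gaussJ (P : ℝ) : ℝ := 27 * Real.sqrt (Real.pi / 8) * (1 + P) / Real.sqrt (1 + 2 * P)

lemma tendsto_itlog_atTop (j : ℕ) : Tendsto (itlog j) atTop atTop := by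
  induction j with
  | zero => exact tendsto_id
  | succ j ih => simpa [itlog, Function.comp_def] using Real.tendsto_log_atTop.comp ih

lemma tendsto_log_div_self : Tendsto (fun y : ℝ => Real.log y / y) atTop (nhds 0) :=
  Real.isLittleO_log_id_atTop.tendsto_div_nhds_zero

lemma itlog_le_self_ev {u : ℕ → ℝ} (hu : Tendsto u atTop atTop) (j : ℕ) :
    ∀ᶠ t in atTop, itlog j (u t) ≤ u t := by
  induction j with
  | zero => exact Eventually.of_forall (fun t => le_rfl)
  | succ j ih =>
    have h1 := (tendsto_itlog_atTop j).comp hu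
    filter_upwards [ih, h1.eventually_ge_atTop 0] with t h h0
    calc itlog (j+1) (u t) = Real.log (itlog j (u t)) := rfl
    _ ≤ itlog j (u t) := Real.log_le_self h0
    _ ≤ u t := h

lemma tendsto_itlog_div_self {u : ℕ → ℝ} (hu : Tendsto u atTop atTop) (j : ℕ) :
    Tendsto (fun t => itlog (j+1) (u t) / u t) atTop (nhds 0) := by
  have hlog : Tendsto (fun t => Real.log (u t) / u t) atTop (nhds 0) := tendsto_log_div_self.comp hu
  apply tendsto_of_tendsto_of_tendsto_of_le_of_le' tendsto_const_nhds hlog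
  · filter_upwards [((tendsto_itlog_atTop (j+1)).comp hu).eventually_ge_atTop 0,
      hu.eventually_gt_atTop 0] with t h1 h2
    exact div_nonneg h1 h2.le
  · filter_upwards [itlog_le_self_ev hu j, hu.eventually_gt_atTop 0,
      ((tendsto_itlog_atTop j).comp hu).eventually_gt_atTop 0] with t h1 h2 h3
    have hle : itlog (j+1) (u t) ≤ Real.log (u t) := by
      show Real.log (itlog j (u t)) ≤ Real.log (u t)
      gcongr
    gcongr

lemma tendsto_itlog_ratio (j : ℕ) {u v : ℕ → ℝ} (hu : Tendsto u atTop atTop)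
    (hv : Tendsto v atTop atTop) (h : Tendsto (fun t => u t / v t) atTop (nhds 1)) :
    Tendsto (fun t => itlog j (u t) / itlog j (v t)) atTop (nhds 1) := by
  induction j with
  | zero => simpa [itlog] using h
  | succ j ih =>
    have hU : Tendsto (fun t => itlog j (u t)) atTop atTop := (tendsto_itlog_atTop j).comp hu
    have hV : Tendsto (fun t => itlog j (v t)) atTop atTop := (tendsto_itlog_atTop j).comp hv
    have hlog0 : Tendsto (fun t => Real.log (itlog j (u t) / itlog j (v t))) atTop (nhds 0) := by
      have hc : ContinuousAt Real.log 1 := Real.continuousAt_log one_ne_zero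
      simpa [Function.comp_def] using hc.tendsto.comp ih
    have hlogV : Tendsto (fun t => Real.log (itlog j (v t))) atTop atTop :=
      Real.tendsto_log_atTop.comp hV
    have hdiv : Tendsto
        (fun t => Real.log (itlog j (u t) / itlog j (v t)) / Real.log (itlog j (v t)) + 1)
        atTop (nhds 1) := by
      simpa using (hlog0.div_atTop hlogV).add (tendsto_const_nhds (x := (1:ℝ)))
    refine Tendsto.congr' ?_ hdiv
    filter_upwards [hU.eventually_gt_atTop 0, hV.eventually_gt_atTop 0,
      hlogV.eventually_gt_atTop 0] with t h1 h2 h3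
    show _ = itlog (j+1) (u t) / itlog (j+1) (v t)
    simp only [itlog]
    rw [Real.log_div h1.ne' h2.ne']
    field_simp
    ring

lemma ratio_aux (b c r q : ℝ) (hb : b ≠ 0) (hc : c ≠ 0) :
    (c * (b * r - b * q)) / (c * (b - b * q)) = (r - q) / (1 - q) := by
  rw [show b * r - b * q = b * (r - q) from by ring,
      show b - b * q = b * (1 - q) from by ring,
      show c * (b * (r - q)) = (c * b) * (r - q) from by ring,
      show c * (b * (1 - q)) = (c * b) * (1 - q) from by ring,
      mul_div_mul_left _ _ (mul_ne_zero hc hb)]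

lemma sqrt_fact {x l v : ℝ} (hx : 0 < x) :
    Real.sqrt (x * l * v) = x * Real.sqrt (l * v / x) := by
  have h1 : x * l * v = x^2 * (l * v / x) := by field_simp
  rw [h1, Real.sqrt_mul (sq_nonneg x), Real.sqrt_sq hx.le]

/-- Asymptotics of the decoding-time gaps: if for each parameter `t` the times
`n t 1 < … < n t K` and threshold `γ t` satisfy
`γ + K ln J(P) = n_k C(P) - √(n_k ln_{(K-k+1)}(n_k) V(P))` for all `k ∈ [K]`, and all
times tend to infinity, then
`n_{i+1} - n_i = (1/C(P))(√(n_i ln_{(K-i)}(n_i) V(P)) - √(n_i ln_{(K-i+1)}(n_i) V(P)))(1+o(1))`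
and `n_k = n₁ (1 + o(1))`. -/
theorem decoding_time_gaps (K : ℕ) (hK : 2 ≤ K) (P : ℝ) (hP : 0 < P)
    (n : ℕ → ℕ → ℝ) (γ : ℕ → ℝ)
    (hmono : ∀ t, ∀ i j, 1 ≤ i → i < j → j ≤ K → n t i < n t j)
    (heq : ∀ t, ∀ k, 1 ≤ k → k ≤ K →
      γ t + (K : ℝ) * Real.log (gaussJ P)
        = n t k * gaussC P - Real.sqrt (n t k * itlog (K - k + 1) (n t k) * gaussV P))
    (htend : ∀ k, 1 ≤ k → k ≤ K → Filter.Tendsto (fun t => n t k) Filter.atTop Filter.atTop) :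
    (∀ i, 1 ≤ i → i ≤ K - 1 →
      Filter.Tendsto
        (fun t => (n t (i + 1) - n t i) /
          ((1 / gaussC P) *
            (Real.sqrt (n t i * itlog (K - i) (n t i) * gaussV P)
              - Real.sqrt (n t i * itlog (K - i + 1) (n t i) * gaussV P))))
        Filter.atTop (nhds 1)) ∧
    (∀ k, 1 ≤ k → k ≤ K →
      Filter.Tendsto (fun t => n t k / n t 1) Filter.atTop (nhds 1)) := by
  have hC : 0 < gaussC P := by
    have h := Real.log_pos (show (1:ℝ) < 1 + P by linarith)
    simp only [gaussC]
    nlinarith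
  have hV : 0 < gaussV P := by
    simp only [gaussV]
    apply div_pos (by nlinarith) (by nlinarith)
  have hn1 := htend 1 le_rfl (by omega)
  have part2 : ∀ k, 1 ≤ k → k ≤ K →
      Tendsto (fun t => n t k / n t 1) atTop (nhds 1) := by
    intro k hk1 hkK
    have hnk := htend k hk1 hkK
    rcases eq_or_lt_of_le hk1 with h1k | h1k
    · subst h1k
      exact Tendsto.congr' (by
        filter_upwards [hn1.eventually_gt_atTop 0] with t ht
        exact (div_self ht.ne').symm) tendsto_const_nhds
    · obtain ⟨m, hm⟩ : ∃ m, K - k + 1 = m + 1 := ⟨K - k, rfl⟩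
      have ha : Tendsto (fun t => itlog (K - k + 1) (n t k) / n t k) atTop (nhds 0) := by
        rw [hm]; exact tendsto_itlog_div_self hnk m
      have h2 : Tendsto (fun t => itlog (K - k + 1) (n t k) * gaussV P / n t k) atTop (nhds 0) := by
        simpa [div_mul_eq_mul_div] using ha.mul_const (gaussV P)
      have h3 : Tendsto (fun t => Real.sqrt (itlog (K - k + 1) (n t k) * gaussV P / n t k))
          atTop (nhds 0) := by
        simpa [Function.comp_def] using (Real.continuous_sqrt.tendsto 0).comp h2
      have hw : Tendsto
          (fun t => 1 - (1/gaussC P) * Real.sqrt (itlog (K - k + 1) (n t k) * gaussV P / n t k))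
          atTop (nhds 1) := by
        simpa using (tendsto_const_nhds (x := (1:ℝ))).sub (h3.const_mul (1/gaussC P))
      have hlow : Tendsto (fun t => n t 1 / n t k) atTop (nhds 1) := by
        apply tendsto_of_tendsto_of_tendsto_of_le_of_le' hw tendsto_const_nhds
        · filter_upwards [hn1.eventually_gt_atTop 0, hnk.eventually_gt_atTop 0] with t h1 hkpos
          have e1 := heq t 1 le_rfl (by omega)
          have ek := heq t k hk1 hkK
          have hXY := e1.symm.trans ek
          set s := Real.sqrt (itlog (K - k + 1) (n t k) * gaussV P / n t k) with hs
          have hfac : Real.sqrt (n t k * itlog (K - k + 1) (n t k) * gaussV P) = n t k * s :=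
            sqrt_fact hkpos
          have hYnn : 0 ≤ Real.sqrt (n t 1 * itlog (K - 1 + 1) (n t 1) * gaussV P) :=
            Real.sqrt_nonneg _
          have key : (n t k - n t 1) * gaussC P ≤ n t k * s := by nlinarith [hXY, hfac, hYnn]
          rw [le_div_iff₀ hkpos]
          have h4 : n t k - n t 1 ≤ (n t k * s) / gaussC P := by
            rw [le_div_iff₀ hC]; exact key
          have h5 : (1/gaussC P) * s * (n t k) = n t k * s / gaussC P := by ring
          nlinarith [h4, h5]
        · filter_upwards [hnk.eventually_gt_atTop 0] with t h2'
          exact div_le_one_of_le₀ (hmono t 1 k le_rfl h1k hkK).le h2'.le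
      have := hlow.inv₀ one_ne_zero
      simp only [inv_div, inv_one] at this
      exact this
  refine ⟨?_, part2⟩
  intro i hi1 hiK
  have hi1K : i + 1 ≤ K := by omega
  have hiK' : i ≤ K := by omega
  have hni := htend i hi1 hiK'
  have hni1 := htend (i+1) (by omega) hi1K
  have hLi : Tendsto (fun t => itlog (K - i) (n t i)) atTop atTop :=
    (tendsto_itlog_atTop (K - i)).comp hni
  have hLi1 : Tendsto (fun t => itlog (K - i) (n t (i+1))) atTop atTop :=
    (tendsto_itlog_atTop (K - i)).comp hni1
  have hratio : Tendsto (fun t => n t (i+1) / n t i) atTop (nhds 1) := by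
    have h1 := part2 i hi1 hiK'
    have h2 := part2 (i+1) (by omega) hi1K
    have h3 := h2.div h1 one_ne_zero
    refine Tendsto.congr' ?_ (by simpa [Pi.div_def] using h3)
    filter_upwards [hn1.eventually_gt_atTop 0, hni.eventually_gt_atTop 0] with t hp1 hpi
    field_simp
  have hq : Tendsto (fun t => itlog (K - i + 1) (n t i) / itlog (K - i) (n t i))
      atTop (nhds 0) := tendsto_itlog_div_self hLi 0
  have hrL : Tendsto (fun t => itlog (K - i) (n t (i+1)) / itlog (K - i) (n t i))
      atTop (nhds 1) := tendsto_itlog_ratio (K - i) hni1 hni hratio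
  have hr : Tendsto
      (fun t => (n t (i+1) * itlog (K - i) (n t (i+1))) / (n t i * itlog (K - i) (n t i)))
      atTop (nhds 1) := by
    have h := hratio.mul hrL
    rw [one_mul] at h
    exact h.congr (fun t => div_mul_div_comm _ _ _ _)
  have hsr : Tendsto
      (fun t => Real.sqrt ((n t (i+1) * itlog (K - i) (n t (i+1))) / (n t i * itlog (K - i) (n t i))))
      atTop (nhds 1) := by
    simpa [Function.comp_def] using (Real.continuous_sqrt.tendsto 1).comp hr
  have hsq : Tendsto
      (fun t => Real.sqrt (itlog (K - i + 1) (n t i) / itlog (K - i) (n t i)))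
      atTop (nhds 0) := by
    simpa [Function.comp_def] using (Real.continuous_sqrt.tendsto 0).comp hq
  have hmain : Tendsto
      (fun t => (Real.sqrt ((n t (i+1) * itlog (K - i) (n t (i+1))) / (n t i * itlog (K - i) (n t i)))
          - Real.sqrt (itlog (K - i + 1) (n t i) / itlog (K - i) (n t i)))
        / (1 - Real.sqrt (itlog (K - i + 1) (n t i) / itlog (K - i) (n t i))))
      atTop (nhds 1) := by
    have h := (hsr.sub hsq).div ((tendsto_const_nhds (x := (1:ℝ))).sub hsq) (by norm_num)
    simpa [Pi.div_def] using h
  refine Tendsto.congr' ?_ hmain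
  filter_upwards [hni.eventually_gt_atTop 0, hni1.eventually_gt_atTop 0,
    hLi.eventually_gt_atTop 0, hLi1.eventually_gt_atTop 0] with t h1 h2 h3 h4
  have hb : 0 < n t i * itlog (K - i) (n t i) * gaussV P :=
    mul_pos (mul_pos h1 h3) hV
  have hb0 : 0 < Real.sqrt (n t i * itlog (K - i) (n t i) * gaussV P) := Real.sqrt_pos.mpr hb
  have hfac1 : Real.sqrt (n t (i+1) * itlog (K - i) (n t (i+1)) * gaussV P)
      = Real.sqrt (n t i * itlog (K - i) (n t i) * gaussV P)
        * Real.sqrt ((n t (i+1) * itlog (K - i) (n t (i+1))) / (n t i * itlog (K - i) (n t i))) := by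
    rw [← Real.sqrt_mul hb.le]
    congr 1
    field_simp
  have hfac2 : Real.sqrt (n t i * itlog (K - i + 1) (n t i) * gaussV P)
      = Real.sqrt (n t i * itlog (K - i) (n t i) * gaussV P)
        * Real.sqrt (itlog (K - i + 1) (n t i) / itlog (K - i) (n t i)) := by
    rw [← Real.sqrt_mul hb.le]
    congr 1
    field_simp
  have ei := heq t i hi1 hiK'
  have ei1 := heq t (i+1) (by omega) hi1K
  rw [show K - (i+1) + 1 = K - i from by omega] at ei1
  have hnum : n t (i+1) - n t i
      = (1/gaussC P) * (Real.sqrt (n t (i+1) * itlog (K - i) (n t (i+1)) * gaussV P)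
          - Real.sqrt (n t i * itlog (K - i + 1) (n t i) * gaussV P)) := by
    have h := ei.symm.trans ei1
    have h' : Real.sqrt (n t (i+1) * itlog (K - i) (n t (i+1)) * gaussV P)
        - Real.sqrt (n t i * itlog (K - i + 1) (n t i) * gaussV P)
        = (n t (i + 1) - n t i) * gaussC P := by linarith
    rw [h']
    field_simp
  rw [hnum, hfac1, hfac2]
  exact (ratio_aux _ _ _ _ hb0.ne' (one_div_ne_zero hC.ne')).symm
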